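/- Let R be a commutative semiring and S a multiplicative subset of R. If P is an S-prime ideal of R, then the S-radical √[S]P = {a ∈ R : s·aⁿ ∈ P for some s ∈ S and some n ≥ 1} is a prime ideal of R. -/
import Mathlib


/-- The S-radical of every S-prime ideal of a commutative semiring is a prime
ideal. -/
theorem sRadical_of_sPrime_isPrime {R : Type*} [CommSemiring R]
    (S : Set R) (hS1 : (1 : R) ∈ S) (hSmul : ∀ s ∈ S, ∀ t ∈ S, s * t ∈ S)
    (P : Ideal R) (hPS : Disjoint S (P : Set R))
    (hPprime : ∃ s ∈ S, ∀ a b : R, a * b ∈ P → s * a ∈ P ∨ s * b ∈ P) :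
    ∃ Q : Ideal R,
      (Q : Set R) = {a : R | ∃ s ∈ S, ∃ n : ℕ, 1 ≤ n ∧ s * a ^ n ∈ P} ∧
      Q.IsPrime := by
  obtain ⟨s₀, hs₀S, hs₀⟩ := hPprime
  refine ⟨{ carrier := {a : R | ∃ s ∈ S, ∃ n : ℕ, 1 ≤ n ∧ s * a ^ n ∈ P}
            zero_mem' := ⟨1, hS1, 1, le_refl 1, by simp⟩
            add_mem' := ?_
            smul_mem' := ?_ }, rfl, ?_⟩
  · rintro a b ⟨s, hs, m, hm, hsa⟩ ⟨t, ht, n, hn, htb⟩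
    refine ⟨s * t, hSmul s hs t ht, m + n, le_trans hm (Nat.le_add_right m n), ?_⟩
    rw [add_pow, Finset.mul_sum]
    refine Ideal.sum_mem P ?_
    intro k hk
    simp only [Finset.mem_range] at hk
    by_cases hkm : m ≤ k
    · have : a ^ k = a ^ m * a ^ (k - m) := by
        rw [← pow_add, Nat.add_sub_cancel' hkm]
      have heq : s * t * (a ^ k * b ^ (m + n - k) * ↑((m + n).choose k)) =
          (s * a ^ m) * (t * (a ^ (k - m) * b ^ (m + n - k) * ↑((m + n).choose k))) := by
        rw [this]; ring
      rw [heq]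
      exact Ideal.mul_mem_right _ _ hsa
    · push_neg at hkm
      have hle : n ≤ m + n - k := by omega
      have : b ^ (m + n - k) = b ^ n * b ^ (m + n - k - n) := by
        rw [← pow_add, Nat.add_sub_cancel' hle]
      have heq : s * t * (a ^ k * b ^ (m + n - k) * ↑((m + n).choose k)) =
          (t * b ^ n) * (s * (a ^ k * b ^ (m + n - k - n) * ↑((m + n).choose k))) := by
        rw [this]; ring
      rw [heq]
      exact Ideal.mul_mem_right _ _ htb
  · rintro r a ⟨s, hs, n, hn, hsa⟩
    refine ⟨s, hs, n, hn, ?_⟩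
    have heq : s * (r • a) ^ n = r ^ n * (s * a ^ n) := by
      rw [smul_eq_mul]; ring
    rw [heq]
    exact Ideal.mul_mem_left _ _ hsa
  · constructor
    · intro h
      have h1 : (1 : R) ∈ (⊤ : Ideal R) := trivial
      rw [← h] at h1
      obtain ⟨s, hs, n, hn, hsa⟩ := h1
      rw [one_pow, mul_one] at hsa
      exact Set.disjoint_left.mp hPS hs hsa
    · rintro a b ⟨s, hs, n, hn, hsab⟩
      rw [mul_pow] at hsab
      rcases hs₀ (s * a ^ n) (b ^ n) (by rwa [← mul_assoc] at hsab) with h | h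
      · exact Or.inl ⟨s₀ * s, hSmul s₀ hs₀S s hs, n, hn, by rwa [mul_assoc]⟩
      · exact Or.inr ⟨s₀, hs₀S, n, hn, h⟩
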